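/- Let n ≥ 1, let Ω ⊆ ℝⁿ be a bounded open set, and let u : Ω → ℝ be continuous such that {x ∈ Ω : u(x) = 0} has Lebesgue measure zero and {x ∈ Ω : u(x) ≠ 0} has exactly m connected components U₁, …, U_m; choose x_i ∈ U_i. Let (Ω_k)_{k≥1} be bounded open subsets of ℝⁿ such that the Lebesgue measure of Ω_k \ Ω tends to 0 as k → ∞ and every compact K ⊂ Ω satisfies K ⊂ Ω_k for all large k, and let v_k : Ω_k → ℝ be continuous with sup_K |v_k − u| → 0 for every compact K ⊂ Ω. For k large enough that v_k(x_i) ≠ 0 for all i, let V_{k,i} be the connected component of {x ∈ Ω_k : v_k(x) ≠ 0} containing x_i. Then the Lebesgue measure of Ω_k \ (V_{k,1} ∪ … ∪ V_{k,m}) tends to 0 as k → ∞. -/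

import Mathlib

open MeasureTheory

/-- The perturbed domain `Ω_k` is, up to a set of vanishing volume, covered by the `m`
tracked nodal domains `V_{k,i}` of the perturbed function `v k` (the connected components
of `{v k ≠ 0}` in `Ω_k` containing the base points `x i` of the nodal domains of `u`). -/
theorem stmt_9 {n : ℕ} (hn : 1 ≤ n)
    (Ω : Set (EuclideanSpace ℝ (Fin n))) (hΩ : IsOpen Ω) (hΩb : Bornology.IsBounded Ω)
    (u : EuclideanSpace ℝ (Fin n) → ℝ) (hu : ContinuousOn u Ω)
    (hu0 : volume {z ∈ Ω | u z = 0} = 0)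
    (m : ℕ) (U : Fin m → Set (EuclideanSpace ℝ (Fin n)))
    (x : Fin m → EuclideanSpace ℝ (Fin n))
    (hxU : ∀ i, x i ∈ U i)
    (hUcomp : ∀ i, U i = connectedComponentIn {z ∈ Ω | u z ≠ 0} (x i))
    (hUinj : Function.Injective U)
    (hUcover : {z ∈ Ω | u z ≠ 0} = ⋃ i, U i)
    (Ωk : ℕ → Set (EuclideanSpace ℝ (Fin n))) (hΩk : ∀ k, IsOpen (Ωk k))
    (hΩkb : ∀ k, Bornology.IsBounded (Ωk k))
    (hmeas : Filter.Tendsto (fun k => volume (Ωk k \ Ω)) Filter.atTop (nhds 0))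
    (hexh : ∀ K : Set (EuclideanSpace ℝ (Fin n)), IsCompact K → K ⊆ Ω →
      ∃ k₀, ∀ k ≥ k₀, K ⊆ Ωk k)
    (v : ℕ → EuclideanSpace ℝ (Fin n) → ℝ) (hv : ∀ k, ContinuousOn (v k) (Ωk k))
    (hconv : ∀ K : Set (EuclideanSpace ℝ (Fin n)), IsCompact K → K ⊆ Ω →
      ∀ δ > 0, ∃ k₀, ∀ k ≥ k₀, ∀ z ∈ K, |v k z - u z| < δ) :
    Filter.Tendsto
      (fun k => volume
        (Ωk k \ ⋃ i, connectedComponentIn {z ∈ Ωk k | v k z ≠ 0} (x i)))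
      Filter.atTop (nhds 0) := by
  classical
  set W : Set (EuclideanSpace ℝ (Fin n)) := {z ∈ Ω | u z ≠ 0} with hWdef
  have hWeq : W = Ω ∩ u ⁻¹' {(0:ℝ)}ᶜ := by
    ext z; exact Iff.rfl
  have hWopen : IsOpen W := by
    rw [hWeq]; exact hu.isOpen_inter_preimage hΩ isOpen_compl_singleton
  have hWsubΩ : W ⊆ Ω := fun z hz => hz.1
  -- the perturbed nodal sets are open
  have hNopen : ∀ k, IsOpen {z ∈ Ωk k | v k z ≠ 0} := by
    intro k
    have : {z ∈ Ωk k | v k z ≠ 0} = Ωk k ∩ (v k) ⁻¹' {(0:ℝ)}ᶜ := by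
      ext z; exact Iff.rfl
    rw [this]; exact (hv k).isOpen_inter_preimage (hΩk k) isOpen_compl_singleton
  set V : ℕ → Fin m → Set (EuclideanSpace ℝ (Fin n)) :=
    fun k i => connectedComponentIn {z ∈ Ωk k | v k z ≠ 0} (x i) with hVdef
  have hVopen : ∀ k i, IsOpen (V k i) := fun k i => (hNopen k).connectedComponentIn
  -- pointwise eventual membership
  have hpt : ∀ z ∈ W, ∀ᶠ k in Filter.atTop, z ∈ ⋃ i, V k i := by
    intro z hz
    rw [hUcover] at hz
    obtain ⟨i, hzU⟩ := Set.mem_iUnion.mp hz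
    have hxW : x i ∈ W := by
      have := hxU i
      rw [hUcomp i] at this
      exact connectedComponentIn_subset _ _ this
    have hUopen : IsOpen (U i) := by
      rw [hUcomp i]; exact hWopen.connectedComponentIn
    have hUconn : IsConnected (U i) := by
      rw [hUcomp i]; exact isConnected_connectedComponentIn_iff.mpr hxW
    have hUpath : IsPathConnected (U i) :=
      hUopen.isConnected_iff_isPathConnected.mp hUconn
    obtain ⟨γ, hγ⟩ := hUpath.joinedIn (x i) (hxU i) z hzU
    set K : Set (EuclideanSpace ℝ (Fin n)) := Set.range γ with hKdef
    have hKcomp : IsCompact K := isCompact_range γ.continuous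
    have hKconn : IsPreconnected K := (isConnected_range γ.continuous).isPreconnected
    have hKU : K ⊆ U i := by rintro _ ⟨t, rfl⟩; exact hγ t
    have hKW : K ⊆ W := hKU.trans (by rw [hUcomp i]; exact connectedComponentIn_subset _ _)
    have hKΩ : K ⊆ Ω := hKW.trans hWsubΩ
    have hxK : x i ∈ K := ⟨0, γ.source⟩
    have hzK : z ∈ K := ⟨1, γ.target⟩
    obtain ⟨w, hwK, hwmin⟩ := hKcomp.exists_isMinOn ⟨x i, hxK⟩
      ((hu.mono hKΩ).abs)
    have hδpos : 0 < |u w| := abs_pos.mpr (hKW hwK).2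
    obtain ⟨k₀, hk₀⟩ := hexh K hKcomp hKΩ
    obtain ⟨k₁, hk₁⟩ := hconv K hKcomp hKΩ _ hδpos
    filter_upwards [Filter.eventually_ge_atTop (max k₀ k₁)] with k hk
    have hKsub : K ⊆ {z ∈ Ωk k | v k z ≠ 0} := by
      intro y hy
      refine ⟨hk₀ k (le_trans (le_max_left _ _) hk) hy, ?_⟩
      intro hvy
      have h1 := hk₁ k (le_trans (le_max_right _ _) hk) y hy
      rw [hvy] at h1
      have h2 : |u w| ≤ |u y| := hwmin hy
      simp only [zero_sub, abs_neg] at h1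
      linarith
    exact Set.mem_iUnion.mpr ⟨i, hKconn.subset_connectedComponentIn hxK hKsub hzK⟩
  -- the uncovered part of W has vanishing measure
  set S : ℕ → Set (EuclideanSpace ℝ (Fin n)) := fun k => W \ ⋃ i, V k i with hSdef
  have hSmeas : ∀ k, MeasurableSet (S k) := fun k =>
    (hWopen.measurableSet).diff (isOpen_iUnion (hVopen k)).measurableSet
  have hΩfin : volume Ω ≠ ⊤ := hΩb.measure_lt_top.ne
  have hS0 : Filter.Tendsto (fun k => volume (S k)) Filter.atTop (nhds 0) := by
    have hrw : ∀ k, volume (S k) = ∫⁻ z, (S k).indicator (fun _ => (1:ENNReal)) z :=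
      fun k => (lintegral_indicator_one (hSmeas k)).symm
    simp only [hrw]
    rw [show nhds (0 : ENNReal)
        = nhds (∫⁻ _ : EuclideanSpace ℝ (Fin n), (0:ENNReal)) by simp]
    apply tendsto_lintegral_of_dominated_convergence
      (Ω.indicator (fun _ => (1:ENNReal)))
    · exact fun k => measurable_const.indicator (hSmeas k)
    · intro k
      filter_upwards with a
      exact Set.indicator_le_indicator_of_subset
        (fun y hy => hWsubΩ hy.1) (fun _ => zero_le) a
    · exact ne_of_eq_of_ne (lintegral_indicator_one hΩ.measurableSet) hΩfin
    · filter_upwards with a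
      by_cases ha : a ∈ W
      · have := hpt a ha
        refine Filter.Tendsto.congr' ?_ tendsto_const_nhds
        filter_upwards [this] with k hk
        exact (Set.indicator_of_notMem (fun h => h.2 hk) _).symm
      · have : ∀ k, (S k).indicator (fun _ => (1:ENNReal)) a = 0 :=
          fun k => Set.indicator_of_notMem (fun h => ha h.1) _
        simp only [this]
        exact tendsto_const_nhds
  -- squeeze
  have hbound : ∀ k,
      volume (Ωk k \ ⋃ i, connectedComponentIn {z ∈ Ωk k | v k z ≠ 0} (x i))
        ≤ volume (Ωk k \ Ω) + volume (S k) := by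
    intro k
    have hsub : Ωk k \ (⋃ i, V k i) ⊆ (Ωk k \ Ω) ∪ {z ∈ Ω | u z = 0} ∪ S k := by
      intro z hz
      by_cases hzΩ : z ∈ Ω
      · by_cases hzu : u z = 0
        · exact Or.inl (Or.inr ⟨hzΩ, hzu⟩)
        · exact Or.inr ⟨⟨hzΩ, hzu⟩, hz.2⟩
      · exact Or.inl (Or.inl ⟨hz.1, hzΩ⟩)
    calc volume (Ωk k \ ⋃ i, V k i)
        ≤ volume ((Ωk k \ Ω) ∪ {z ∈ Ω | u z = 0} ∪ S k) := measure_mono hsub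
      _ ≤ volume ((Ωk k \ Ω) ∪ {z ∈ Ω | u z = 0}) + volume (S k) := measure_union_le _ _
      _ ≤ volume (Ωk k \ Ω) + volume {z ∈ Ω | u z = 0} + volume (S k) := by
          exact add_le_add_left (measure_union_le _ _) _
      _ = volume (Ωk k \ Ω) + volume (S k) := by rw [hu0, add_zero]
  have hsum : Filter.Tendsto (fun k => volume (Ωk k \ Ω) + volume (S k))
      Filter.atTop (nhds 0) := by
    have := Filter.Tendsto.add hmeas hS0
    simpa using this
  exact tendsto_of_tendsto_of_tendsto_of_le_of_le tendsto_const_nhds hsum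
    (fun k => zero_le) hbound
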